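/- For all real x ≥ 1, 0 ≤ log Γ(x) - x(log x - 1) - (1/2)·log(2π/x) ≤ 1/(12x). -/

import Mathlib

open Real Filter Topology Finset

noncomputable def binetF (y : ℝ) : ℝ :=
  Real.log (Real.Gamma y) - (y - 1/2) * Real.log y + y

noncomputable def binetG (y : ℝ) : ℝ :=
  (y + 1/2) * (Real.log (y + 1) - Real.log y) - 1

/-- Series lower bound for `log ((1+u)/(1-u))`. -/
lemma log_ratio_lower {u : ℝ} (h0 : 0 ≤ u) (h1 : u < 1) :
    2 * u ≤ Real.log (1 + u) - Real.log (1 - u) := by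
  have habs : |u| < 1 := abs_lt.2 ⟨by linarith, h1⟩
  have hs := Real.hasSum_log_sub_log_of_abs_lt_one habs
  have hf : HasSum (fun k : ℕ => if k = 0 then 2*u else 0) (2*u) := hasSum_ite_eq 0 (2*u)
  refine hasSum_le (fun k => ?_) hf hs
  by_cases hk : k = 0
  · subst hk; norm_num
  · simp only [hk, if_false]
    positivity

/-- Series upper bound for `log ((1+u)/(1-u))`. -/
lemma log_ratio_upper {u : ℝ} (h0 : 0 ≤ u) (h1 : u < 1) :
    Real.log (1 + u) - Real.log (1 - u) ≤ 2*u + (2/3) * u^3 / (1 - u^2) := by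
  have habs : |u| < 1 := abs_lt.2 ⟨by linarith, h1⟩
  have hu2 : u^2 < 1 := by nlinarith
  have hs := Real.hasSum_log_sub_log_of_abs_lt_one habs
  have hg : HasSum (fun k : ℕ => (2/3)*u*(u^2)^k) ((2/3)*u*(1-u^2)⁻¹) :=
    (hasSum_geometric_of_lt_one (by positivity) hu2).mul_left _
  have hf : HasSum (fun k : ℕ => if k = 0 then 2*u - (2/3)*u else 0) (2*u - (2/3)*u) :=
    hasSum_ite_eq 0 _
  have hgf := hg.add hf
  have hne : (1:ℝ) - u^2 ≠ 0 := by nlinarith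
  have hsum : (2/3)*u*(1-u^2)⁻¹ + (2*u - (2/3)*u) = 2*u + (2/3) * u^3 / (1 - u^2) := by
    field_simp
    ring
  rw [hsum] at hgf
  refine hasSum_le (fun k => ?_) hs hgf
  by_cases hk : k = 0
  · subst hk; norm_num
  · simp only [hk, if_false, add_zero]
    have hk1 : 1 ≤ k := Nat.one_le_iff_ne_zero.2 hk
    have h3 : (3:ℝ) ≤ 2*(k:ℝ)+1 := by
      have : (1:ℝ) ≤ (k:ℝ) := by exact_mod_cast hk1
      linarith
    have hpow : u ^ (2*k+1) = u * (u^2)^k := by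
      rw [pow_succ, pow_mul]
      ring
    rw [hpow]
    have : 2 * (1 / (2*(k:ℝ)+1)) ≤ 2/3 := by
      rw [mul_one_div]
      apply div_le_div_of_nonneg_left (by norm_num) (by norm_num) h3
    calc 2 * (1 / (2*(k:ℝ)+1)) * (u * (u^2)^k) ≤ (2/3) * (u * (u^2)^k) := by
          apply mul_le_mul_of_nonneg_right this (by positivity)
      _ = 2/3 * u * (u^2)^k := by ring

lemma log_succ_sub_log {y : ℝ} (hy : 0 < y) :
    Real.log (y + 1) - Real.log y
      = Real.log (1 + 1/(2*y+1)) - Real.log (1 - 1/(2*y+1)) := by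
  have h1 : (1:ℝ) + 1/(2*y+1) = (y+1) * (2/(2*y+1)) := by field_simp; ring
  have h2 : (1:ℝ) - 1/(2*y+1) = y * (2/(2*y+1)) := by field_simp; ring
  rw [h1, h2, Real.log_mul (by positivity) (by positivity),
    Real.log_mul (by positivity) (by positivity)]
  ring

lemma u_facts {y : ℝ} (hy : 0 < y) :
    0 ≤ 1/(2*y+1) ∧ 1/(2*y+1) < 1 := by
  constructor
  · positivity
  · rw [div_lt_one (by linarith)]; linarith

lemma binetG_nonneg {y : ℝ} (hy : 0 < y) : 0 ≤ binetG y := by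
  obtain ⟨h0, h1⟩ := u_facts hy
  have := log_ratio_lower h0 h1
  rw [← log_succ_sub_log hy] at this
  have h2 : (1:ℝ) ≤ (y + 1/2) * (Real.log (y+1) - Real.log y) := by
    have hpos : (0:ℝ) < y + 1/2 := by linarith
    have : 2 * (1/(2*y+1)) * (y + 1/2) ≤ (Real.log (y+1) - Real.log y) * (y + 1/2) :=
      mul_le_mul_of_nonneg_right this hpos.le
    have he : 2 * (1/(2*y+1)) * (y + 1/2) = 1 := by field_simp
    linarith [he ▸ this]
  unfold binetG; linarith

lemma binetG_le {y : ℝ} (hy : 0 < y) :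
    binetG y ≤ 1/(12*y) - 1/(12*(y+1)) := by
  obtain ⟨h0, h1⟩ := u_facts hy
  have hub := log_ratio_upper h0 h1
  rw [← log_succ_sub_log hy] at hub
  set u := 1/(2*y+1) with hu
  have hpos : (0:ℝ) < y + 1/2 := by linarith
  have h2 : (y + 1/2) * (Real.log (y+1) - Real.log y)
      ≤ (y + 1/2) * (2*u + (2/3)*u^3/(1-u^2)) :=
    mul_le_mul_of_nonneg_left hub hpos.le
  have he : (y + 1/2) * (2*u + (2/3)*u^3/(1-u^2)) = 1 + (1/(12*y) - 1/(12*(y+1))) := by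
    rw [hu]
    have h21 : (2*y+1) ≠ 0 := by positivity
    have : (1:ℝ) - (1/(2*y+1))^2 = (4*y^2+4*y)/((2*y+1)^2) := by field_simp; ring
    rw [this]
    field_simp
    ring
  unfold binetG
  rw [he] at h2
  linarith

lemma binetF_step {y : ℝ} (hy : 0 < y) : binetF y - binetF (y + 1) = binetG y := by
  unfold binetF binetG
  rw [Real.Gamma_add_one (ne_of_gt hy),
    Real.log_mul (ne_of_gt hy) (ne_of_gt (Real.Gamma_pos_of_pos hy))]
  ring

lemma binetF_telescope {y : ℝ} (hy : 0 < y) (n : ℕ) :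
    binetF y - binetF (y + n) = ∑ k ∈ Finset.range n, binetG (y + k) := by
  induction n with
  | zero => simp
  | succ n ih =>
    rw [Finset.sum_range_succ, ← ih]
    have hyn : (0:ℝ) < y + n := by positivity
    have := binetF_step hyn
    have harg : y + (n+1:ℕ) = (y + n) + 1 := by push_cast; ring
    rw [harg]
    linarith

lemma binetF_sub_nonneg {y : ℝ} (hy : 0 < y) (n : ℕ) :
    0 ≤ binetF y - binetF (y + n) := by
  rw [binetF_telescope hy n]
  apply Finset.sum_nonneg
  intro k _
  exact binetG_nonneg (by positivity)

lemma binetF_sub_le {y : ℝ} (hy : 0 < y) (n : ℕ) :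
    binetF y - binetF (y + n) ≤ 1/(12*y) := by
  rw [binetF_telescope hy n]
  have h1 : ∑ k ∈ Finset.range n, binetG (y + k)
      ≤ ∑ k ∈ Finset.range n, (1/(12*(y+k)) - 1/(12*(y+k+1))) := by
    apply Finset.sum_le_sum
    intro k _
    have hyk : (0:ℝ) < y + k := by positivity
    have := binetG_le hyk
    simpa using this
  have h2 : ∑ k ∈ Finset.range n, (1/(12*(y+k)) - 1/(12*(y+k+1)))
      = 1/(12*y) - 1/(12*(y+n)) := by
    have := Finset.sum_range_sub' (fun k : ℕ => 1/(12*(y+k))) n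
    simp only [Nat.cast_zero, add_zero] at this
    rw [← this]
    apply Finset.sum_congr rfl
    intro k _
    push_cast
    ring_nf
  have h3 : (0:ℝ) < 1/(12*(y+n)) := by positivity
  rw [h2] at h1
  linarith

lemma tendsto_binetG_nat : Tendsto (fun n : ℕ => binetG n) atTop (𝓝 0) := by
  have hb : Tendsto (fun n : ℕ => 1/(12*(n:ℝ))) atTop (𝓝 0) := by
    have h := tendsto_one_div_atTop_nhds_zero_nat.const_mul (1/12 : ℝ)
    rw [mul_zero] at h
    exact h.congr fun n => by ring
  apply squeeze_zero' (g := fun n : ℕ => 1/(12*(n:ℝ)))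
  · filter_upwards [eventually_ge_atTop 1] with n hn
    exact binetG_nonneg (by exact_mod_cast Nat.pos_of_ne_zero (by omega))
  · filter_upwards [eventually_ge_atTop 1] with n hn
    have hn0 : (0:ℝ) < n := by exact_mod_cast Nat.pos_of_ne_zero (by omega)
    have := binetG_le hn0
    have h2 : 1/(12*(n:ℝ)) - 1/(12*((n:ℝ)+1)) ≤ 1/(12*(n:ℝ)) := by
      have : 0 < 1/(12*((n:ℝ)+1)) := by positivity
      linarith
    linarith
  · exact hb

lemma binetF_stirling_formula {n : ℕ} (hn : 1 ≤ n) :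
    binetF ((n:ℝ) + 1) = Real.log (Stirling.stirlingSeq n) + (1/2)*Real.log 2 - binetG n := by
  have hn0 : (0:ℝ) < n := by exact_mod_cast hn
  have h1 := Stirling.log_stirlingSeq_formula n
  have h2 : Real.log ((n:ℝ) / Real.exp 1) = Real.log n - 1 := by
    rw [Real.log_div (ne_of_gt hn0) (Real.exp_ne_zero 1), Real.log_exp]
  have h3 : Real.log (2*(n:ℝ)) = Real.log 2 + Real.log n :=
    Real.log_mul two_ne_zero (ne_of_gt hn0)
  have h4 : Real.Gamma ((n:ℝ) + 1) = (n.factorial : ℝ) := Real.Gamma_nat_eq_factorial n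
  unfold binetF binetG
  rw [h4, h1, h2, h3]
  ring

/-- Stirling: the limit of `binetF` at natural numbers. -/
lemma tendsto_binetF_nat :
    Tendsto (fun n : ℕ => binetF (n + 1)) atTop (𝓝 ((1/2) * Real.log (2 * Real.pi))) := by
  have hsp : (0:ℝ) < Real.sqrt Real.pi := Real.sqrt_pos.2 Real.pi_pos
  have h1 : Tendsto (fun n : ℕ => Real.log (Stirling.stirlingSeq n)) atTop
      (𝓝 (Real.log (Real.sqrt Real.pi))) :=
    Stirling.tendsto_stirlingSeq_sqrt_pi.log (ne_of_gt hsp)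
  have h2 : Tendsto (fun n : ℕ => Real.log (Stirling.stirlingSeq n) + (1/2)*Real.log 2
      - binetG n) atTop (𝓝 (Real.log (Real.sqrt Real.pi) + (1/2)*Real.log 2 - 0)) :=
    (h1.add_const _).sub tendsto_binetG_nat
  have h3 : Real.log (Real.sqrt Real.pi) + (1/2)*Real.log 2 - 0
      = (1/2) * Real.log (2 * Real.pi) := by
    rw [Real.log_sqrt Real.pi_pos.le, Real.log_mul two_ne_zero (ne_of_gt Real.pi_pos)]
    ring
  rw [h3] at h2
  apply h2.congr'
  filter_upwards [eventually_ge_atTop 1] with n hn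
  exact (binetF_stirling_formula hn).symm

lemma conv_aux {t : ℝ} (ht : 0 < t) {s : ℝ} (hs0 : 0 ≤ s) (hs1 : s ≤ 1) :
    Real.log (Real.Gamma (t + s))
      ≤ (1-s) * Real.log (Real.Gamma t) + s * Real.log (Real.Gamma (t+1)) := by
  have h := Real.convexOn_log_Gamma.2 (Set.mem_Ioi.2 ht)
    (Set.mem_Ioi.2 (by linarith : (0:ℝ) < t + 1)) (by linarith : (0:ℝ) ≤ 1 - s) hs0
    (by ring)
  simpa [smul_eq_mul, Function.comp, show (1-s) * t + s * (t+1) = t + s by ring] using h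

noncomputable def loSeq (x s : ℝ) (n : ℕ) : ℝ :=
  (x + n) * Real.log (1 + s/(x+n)) + (s - 1/2) * Real.log (1 + s/(x+n)) - s

noncomputable def upSeq (x s : ℝ) (n : ℕ) : ℝ :=
  loSeq x s n + s * Real.log (1 + (1-s)/((x+s-1) + n))

lemma tendsto_log_one_add_div (x c : ℝ) (hx : Tendsto (fun n : ℕ => x + (n:ℝ)) atTop atTop) :
    Tendsto (fun n : ℕ => Real.log (1 + c/(x+n))) atTop (𝓝 0) := by
  have h1 : Tendsto (fun n : ℕ => 1 + c/(x+n)) atTop (𝓝 1) := by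
    have := (tendsto_inv_atTop_zero.comp hx).const_mul c
    rw [mul_zero] at this
    have h2 := tendsto_const_nhds (x := (1:ℝ)) (f := atTop (α := ℕ)) |>.add this
    rw [add_zero] at h2
    exact h2.congr fun n => by simp [div_eq_mul_inv, Function.comp]
  have := h1.log one_ne_zero
  rwa [Real.log_one] at this

lemma tendsto_loSeq (x s : ℝ) : Tendsto (loSeq x s) atTop (𝓝 0) := by
  have h_y : Tendsto (fun n : ℕ => x + (n:ℝ)) atTop atTop :=
    tendsto_atTop_add_const_left _ x tendsto_natCast_atTop_atTop
  have T1 : Tendsto (fun n : ℕ => (x + n) * Real.log (1 + s/(x+n))) atTop (𝓝 s) :=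
    (Real.tendsto_mul_log_one_add_div_atTop s).comp h_y
  have T2 := (tendsto_log_one_add_div x s h_y).const_mul (s - 1/2)
  rw [mul_zero] at T2
  have := (T1.add T2).sub_const s
  rw [add_zero, sub_self] at this
  exact this

lemma tendsto_upSeq (x s : ℝ) : Tendsto (upSeq x s) atTop (𝓝 0) := by
  have h_y2 : Tendsto (fun n : ℕ => (x+s-1) + (n:ℝ)) atTop atTop :=
    tendsto_atTop_add_const_left _ _ tendsto_natCast_atTop_atTop
  have T3 := (tendsto_log_one_add_div (x+s-1) (1-s) h_y2).const_mul s
  rw [mul_zero] at T3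
  have := (tendsto_loSeq x s).add T3
  rw [add_zero] at this
  exact this

/-- limit of shifted binetF at an arbitrary real point. -/
lemma tendsto_binetF_shift (x : ℝ) (hx : 1 ≤ x) :
    Tendsto (fun n : ℕ => binetF (x + n)) atTop (𝓝 ((1/2) * Real.log (2 * Real.pi))) := by
  have hx0 : (0:ℝ) < x := by linarith
  obtain ⟨m, hm1, hxm, hmx⟩ : ∃ m : ℕ, 1 ≤ m ∧ x ≤ (m:ℝ) ∧ (m:ℝ) < x + 1 := by
    refine ⟨⌈x⌉₊, ?_, Nat.le_ceil x, Nat.ceil_lt_add_one (by linarith)⟩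
    rw [Nat.one_le_iff_ne_zero, ne_eq, Nat.ceil_eq_zero, not_le]
    linarith
  set s : ℝ := (m:ℝ) - x with hs
  have hs0 : 0 ≤ s := by rw [hs]; linarith
  have hs1 : s < 1 := by rw [hs]; linarith
  -- limit of the integer-shifted sequence
  have hM : Tendsto (fun n : ℕ => binetF ((m:ℝ) + n)) atTop
      (𝓝 ((1/2) * Real.log (2 * Real.pi))) := by
    have h := tendsto_binetF_nat.comp (tendsto_add_atTop_nat (m - 1))
    refine h.congr fun n => ?_
    show binetF (((n + (m - 1) : ℕ) : ℝ) + 1) = binetF ((m:ℝ) + n)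
    congr 1
    push_cast [Nat.cast_sub hm1]
    ring
  -- the sandwich inequalities for n ≥ 1
  have key : ∀ n : ℕ, 1 ≤ n →
      loSeq x s n ≤ binetF (x + n) - binetF ((m:ℝ) + n) ∧
      binetF (x + n) - binetF ((m:ℝ) + n) ≤ upSeq x s n := by
    intro n hn
    have hn1 : (1:ℝ) ≤ (n:ℝ) := by exact_mod_cast hn
    have hm1' : (1:ℝ) ≤ (m:ℝ) := by exact_mod_cast hm1
    set y : ℝ := x + n with hy
    set N : ℝ := (m:ℝ) + n with hN
    have hy0 : 0 < y := by rw [hy]; linarith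
    have hN0 : 0 < N := by rw [hN]; linarith
    have hNm1 : (0:ℝ) < N - 1 := by rw [hN]; linarith
    have hNy : N = y + s := by rw [hN, hy, hs]; ring
    have hGy1 : Real.log (Real.Gamma (y+1)) = Real.log y + Real.log (Real.Gamma y) := by
      rw [Real.Gamma_add_one (ne_of_gt hy0),
        Real.log_mul (ne_of_gt hy0) (ne_of_gt (Real.Gamma_pos_of_pos hy0))]
    have hGN1 : Real.log (Real.Gamma N) = Real.log (N-1) + Real.log (Real.Gamma (N-1)) := by
      have h := Real.Gamma_add_one (ne_of_gt hNm1)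
      rw [sub_add_cancel] at h
      rw [h, Real.log_mul (ne_of_gt hNm1) (ne_of_gt (Real.Gamma_pos_of_pos hNm1))]
    -- convexity inequality (ii)
    have hii : Real.log (Real.Gamma N) ≤ Real.log (Real.Gamma y) + s * Real.log y := by
      have h := conv_aux hy0 hs0 hs1.le
      rw [← hNy, hGy1] at h
      nlinarith [h]
    -- convexity inequality (i)
    have hi : Real.log (Real.Gamma y)
        ≤ Real.log (Real.Gamma N) - s * Real.log (N-1) := by
      have h := conv_aux hNm1 (by linarith : (0:ℝ) ≤ 1 - s) (by linarith)
      rw [show N - 1 + (1 - s) = y by rw [hNy]; ring,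
        show N - 1 + 1 = N by ring, hGN1] at h
      nlinarith [h]
    -- log ratio identities
    have hlogNy : Real.log N - Real.log y = Real.log (1 + s/y) := by
      rw [show (1:ℝ) + s/y = N/y by rw [hNy]; field_simp,
        Real.log_div (ne_of_gt hN0) (ne_of_gt hy0)]
    have hlogyN1 : Real.log y - Real.log (N-1) = Real.log (1 + (1-s)/((x+s-1)+n)) := by
      have hN1y : (x+s-1) + (n:ℝ) = N - 1 := by rw [hNy, hy]; ring
      have hfrac : (1:ℝ) + (1-s)/(N-1) = y/(N-1) := by
        rw [eq_div_iff (ne_of_gt hNm1), add_mul, div_mul_cancel₀ _ (ne_of_gt hNm1), hNy]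
        ring
      rw [hN1y, hfrac, Real.log_div (ne_of_gt hy0) (ne_of_gt hNm1)]
    have e1 : loSeq x s n = (N - 1/2) * (Real.log N - Real.log y) - s := by
      rw [loSeq, hlogNy, ← hy]
      rw [show N - 1/2 = y + (s - 1/2) by rw [hNy]; ring]
      ring
    have e2 : upSeq x s n = (N - 1/2) * (Real.log N - Real.log y)
        + s * (Real.log y - Real.log (N-1)) - s := by
      rw [upSeq, e1, hlogyN1]; ring
    have e3 : (N - 1/2) * (Real.log N - Real.log y)
        = (N - 1/2) * Real.log N - (N - 1/2) * Real.log y := by ring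
    have e4 : (N - 1/2) * Real.log y - (y - 1/2) * Real.log y = s * Real.log y := by
      rw [hNy]; ring
    have e5 : s * (Real.log y - Real.log (N-1)) = s * Real.log y - s * Real.log (N-1) := by
      ring
    clear_value y N s
    constructor
    · rw [e1]; unfold binetF; rw [e3]
      linarith [hii, e4, hNy]
    · rw [e2]; unfold binetF; rw [e3, e5]
      linarith [hi, e4, hNy]
  -- assemble
  have hD : Tendsto (fun n : ℕ => binetF (x + n) - binetF ((m:ℝ) + n)) atTop (𝓝 0) := by
    refine tendsto_of_tendsto_of_tendsto_of_le_of_le' (tendsto_loSeq x s)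
      (tendsto_upSeq x s) ?_ ?_
    · filter_upwards [eventually_ge_atTop 1] with n hn using (key n hn).1
    · filter_upwards [eventually_ge_atTop 1] with n hn using (key n hn).2
  have h := hM.add hD
  rw [add_zero] at h
  exact h.congr fun n => by ring

theorem stirling_bounds (x : ℝ) (hx : 1 ≤ x) :
    0 ≤ Real.log (Real.Gamma x) - x * (Real.log x - 1)
        - (1 / 2) * Real.log (2 * Real.pi / x) ∧
      Real.log (Real.Gamma x) - x * (Real.log x - 1)
        - (1 / 2) * Real.log (2 * Real.pi / x) ≤ 1 / (12 * x) := by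
  have hx0 : (0:ℝ) < x := lt_of_lt_of_le one_pos hx
  have key : Real.log (Real.Gamma x) - x * (Real.log x - 1)
      - (1 / 2) * Real.log (2 * Real.pi / x)
      = binetF x - (1/2) * Real.log (2 * Real.pi) := by
    rw [Real.log_div (by positivity) (ne_of_gt hx0), binetF]
    ring
  rw [key]
  have h1 : Tendsto (fun n : ℕ => binetF x - binetF (x + n)) atTop
      (𝓝 (binetF x - (1/2) * Real.log (2 * Real.pi))) :=
    tendsto_const_nhds.sub (tendsto_binetF_shift x hx)
  constructor
  · exact ge_of_tendsto h1 (Eventually.of_forall fun n => binetF_sub_nonneg hx0 n)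
  · have := le_of_tendsto h1 (Eventually.of_forall fun n => binetF_sub_le hx0 n)
    have he : 1/(12*x) = 1 / (12 * x) := rfl
    linarith
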